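/- Let 0 < α ≤ 1/8 and β ≤ α/4. For any properly edge-coloured complete graph K_n, either (i) at least n − 16βn colours are α-rich, or (ii) K_n is (β, βn)-robustly-coloured. -/

import Mathlib

open scoped Classical

/-- A colouring of edges is proper if edges sharing a vertex get distinct colours. -/
def ProperColoring {V : Type*} (G : SimpleGraph V) (c : Sym2 V → ℕ) : Prop :=
  ∀ ⦃a b b' : V⦄, G.Adj a b → G.Adj a b' → b ≠ b' → c s(a, b) ≠ c s(a, b')

/-- A set of edges is rainbow if its edges have pairwise distinct colours. -/
def IsRainbow {V : Type*} (c : Sym2 V → ℕ) (E : Set (Sym2 V)) : Prop :=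
  Set.InjOn c E

/-- A finite set of edges forms a matching: non-loops, pairwise vertex-disjoint. -/
def IsMatchingSet {V : Type*} (M : Finset (Sym2 V)) : Prop :=
  (∀ e ∈ M, ¬ e.IsDiag) ∧
  ∀ e ∈ M, ∀ f ∈ M, e ≠ f → ∀ v : V, v ∈ e → v ∉ f

/-- A class `U` of colours is `α`-rich in `G`: the edges of `G` with colour in `U`
contain a matching of size at least `α * |V|`. -/
def RichClass {V : Type*} [Fintype V] (G : SimpleGraph V) (c : Sym2 V → ℕ)
    (α : ℝ) (U : Set ℕ) : Prop :=
  ∃ M : Finset (Sym2 V), ↑M ⊆ G.edgeSet ∧ (∀ e ∈ M, c e ∈ U) ∧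
    IsMatchingSet M ∧ α * (Fintype.card V : ℝ) ≤ (M.card : ℝ)

/-- `G` is `α`-well-coloured: its colours can be partitioned into `|V| - 1`
pairwise disjoint `α`-rich classes. -/
def WellColoured {V : Type*} [Fintype V] (G : SimpleGraph V) (c : Sym2 V → ℕ)
    (α : ℝ) : Prop :=
  ∃ U : Fin (Fintype.card V - 1) → Set ℕ,
    (∀ i j, i ≠ j → Disjoint (U i) (U j)) ∧
    (∀ i, RichClass G c α (U i)) ∧
    (∀ e ∈ G.edgeSet, ∃ i, c e ∈ U i)

/-- A rainbow forest in `G`. -/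
def RainbowForest {V : Type*} (G : SimpleGraph V) (c : Sym2 V → ℕ)
    (F : SimpleGraph V) : Prop :=
  F ≤ G ∧ F.IsAcyclic ∧ IsRainbow c F.edgeSet

/-- `G` is `(α, t)`-robustly-coloured: after removing the edges of any `t`
rainbow forests, `G` remains `α`-well-coloured. -/
def RobustlyColoured {V : Type*} [Fintype V] (G : SimpleGraph V) (c : Sym2 V → ℕ)
    (α : ℝ) (t : ℕ) : Prop :=
  ∀ F : Fin t → SimpleGraph V, (∀ i, RainbowForest G c (F i)) →
    WellColoured (G.deleteEdges (⋃ i, (F i).edgeSet)) c α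


namespace Stmt3Aux
open Finset SimpleGraph
set_option linter.unusedSectionVars false
set_option maxHeartbeats 1000000

variable {V : Type*} [Fintype V] [DecidableEq V]






lemma verts_of_edge_card (e : Sym2 V) (he : ¬ e.IsDiag) :
    (Finset.univ.filter (· ∈ e)).card = 2 := by
  induction e with
  | _ a b =>
    have hab : a ≠ b := by simpa using he
    have h2 : Finset.univ.filter (· ∈ s(a, b)) = {a, b} := by
      ext v; simp [Sym2.mem_iff]
    rw [h2, Finset.card_insert_of_notMem (by simpa using hab), Finset.card_singleton]

lemma verts_of_edge_card_le (e : Sym2 V) :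
    (Finset.univ.filter (· ∈ e)).card ≤ 2 := by
  induction e with
  | _ a b =>
    have h2 : Finset.univ.filter (· ∈ s(a, b)) ⊆ {a, b} := by
      intro v; simp [Sym2.mem_iff]
    calc (Finset.univ.filter (· ∈ s(a, b))).card ≤ ({a, b} : Finset V).card :=
          Finset.card_le_card h2
      _ ≤ 2 := by
          apply (Finset.card_insert_le _ _).trans
          simp

lemma matching_card_le {M : Finset (Sym2 V)} (hM : IsMatchingSet M) :
    2 * M.card ≤ Fintype.card V := by
  have hdisj : ∀ e ∈ M, ∀ f ∈ M, e ≠ f →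
      Disjoint (Finset.univ.filter (· ∈ e)) (Finset.univ.filter (· ∈ f)) := by
    intro e he f hf hne
    rw [Finset.disjoint_left]
    intro v hv hv'
    exact (hM.2 e he f hf hne v (Finset.mem_filter.1 hv).2) (Finset.mem_filter.1 hv').2
  calc 2 * M.card = ∑ e ∈ M, (Finset.univ.filter (· ∈ e)).card := by
        rw [Finset.sum_congr rfl (fun e he => verts_of_edge_card e (hM.1 e he))]
        simp [mul_comm]
    _ = (M.biUnion (fun e => Finset.univ.filter (· ∈ e))).card :=
        (Finset.card_biUnion hdisj).symm
    _ ≤ Finset.univ.card := Finset.card_le_univ _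
    _ = Fintype.card V := Finset.card_univ

lemma colour_matching {c : Sym2 V → ℕ} (hproper : ProperColoring (⊤ : SimpleGraph V) c)
    {M : Finset (Sym2 V)} (hM : ∀ e ∈ M, e ∈ (⊤ : SimpleGraph V).edgeSet)
    (hc : ∀ e ∈ M, ∀ f ∈ M, c e = c f) : IsMatchingSet M := by
  constructor
  · intro e he
    exact SimpleGraph.not_isDiag_of_mem_edgeSet _ (hM e he)
  · intro e he f hf hne v hv hv'
    obtain ⟨a, rfl⟩ : ∃ a, e = s(v, a) := Sym2.mem_iff_exists.1 hv
    obtain ⟨b, rfl⟩ : ∃ b, f = s(v, b) := Sym2.mem_iff_exists.1 hv'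
    have hva : v ≠ a := by
      intro h; subst h
      exact (SimpleGraph.not_isDiag_of_mem_edgeSet _ (hM _ he)) (by simp)
    have hvb : v ≠ b := by
      intro h; subst h
      exact (SimpleGraph.not_isDiag_of_mem_edgeSet _ (hM _ hf)) (by simp)
    have hab : a ≠ b := by
      intro h; subst h; exact hne rfl
    exact hproper (by simp [hva]) (by simp [hvb]) hab (hc _ he _ hf)







lemma touch_card_le (G : SimpleGraph V) (S : Finset V) :
    ((G.edgeFinset).filter (fun e => ∃ v ∈ S, v ∈ e)).card ≤ S.card * (Fintype.card V - 1) := by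
  have hsub : (G.edgeFinset).filter (fun e => ∃ v ∈ S, v ∈ e) ⊆
      S.biUnion (fun v => G.incidenceFinset v) := by
    intro e he
    obtain ⟨he1, v, hvS, hve⟩ := Finset.mem_filter.1 he
    exact Finset.mem_biUnion.2 ⟨v, hvS, by
      rw [SimpleGraph.mem_incidenceFinset]
      exact ⟨SimpleGraph.mem_edgeFinset.1 he1, hve⟩⟩
  calc ((G.edgeFinset).filter (fun e => ∃ v ∈ S, v ∈ e)).card
      ≤ (S.biUnion (fun v => G.incidenceFinset v)).card := Finset.card_le_card hsub
    _ ≤ ∑ v ∈ S, (G.incidenceFinset v).card := Finset.card_biUnion_le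
    _ ≤ ∑ _v ∈ S, (Fintype.card V - 1) := Finset.sum_le_sum (fun v _ => by
        rw [SimpleGraph.card_incidenceFinset_eq_degree]
        have := G.degree_lt_card_verts v; omega)
    _ = S.card * (Fintype.card V - 1) := by rw [Finset.sum_const, smul_eq_mul]

lemma card_surj_lt' {A B : Type*} [Fintype A] [Fintype B] (f : A → B)
    (hf : Function.Surjective f) {a₁ a₂ : A} (hne : a₁ ≠ a₂) (heq : f a₁ = f a₂) :
    Fintype.card B + 1 ≤ Fintype.card A := by
  have himg : (Finset.univ.erase a₂).image f = Finset.univ := by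
    apply Finset.eq_univ_of_forall
    intro b
    obtain ⟨a, rfl⟩ := hf b
    rcases eq_or_ne a a₂ with rfl | h
    · exact Finset.mem_image.2 ⟨a₁, Finset.mem_erase.2 ⟨hne, Finset.mem_univ _⟩, heq⟩
    · exact Finset.mem_image.2 ⟨a, Finset.mem_erase.2 ⟨h, Finset.mem_univ _⟩, rfl⟩
  have h1 : Fintype.card B ≤ (Finset.univ.erase a₂).card := by
    calc Fintype.card B = ((Finset.univ.erase a₂).image f).card := by
          rw [himg, Finset.card_univ]
      _ ≤ (Finset.univ.erase a₂).card := Finset.card_image_le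
  have h2 : (Finset.univ.erase a₂).card = Fintype.card A - 1 := by
    rw [Finset.card_erase_of_mem (Finset.mem_univ _), Finset.card_univ]
  have h3 : 1 ≤ Fintype.card A := Fintype.card_pos_iff.2 ⟨a₁⟩
  omega

lemma card_surj_lt {A B : Type*} [Finite A] [Finite B] (f : A → B)
    (hf : Function.Surjective f) {a₁ a₂ : A} (hne : a₁ ≠ a₂) (heq : f a₁ = f a₂) :
    Nat.card B + 1 ≤ Nat.card A := by
  have := Fintype.ofFinite A
  have := Fintype.ofFinite B
  rw [Nat.card_eq_fintype_card, Nat.card_eq_fintype_card]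
  exact card_surj_lt' f hf hne heq

lemma acyclic_aux : ∀ (k : ℕ) (F : SimpleGraph V), F.IsAcyclic → F.edgeSet.ncard = k →
    F.edgeSet.ncard + Nat.card F.ConnectedComponent ≤ Fintype.card V := by
  intro k
  induction k using Nat.strong_induction_on with
  | _ k ih =>
    intro F hF hk
    rcases eq_or_ne k 0 with rfl | hk0
    · have hbot : F = ⊥ := by
        rw [← SimpleGraph.edgeSet_eq_empty]
        exact (Set.ncard_eq_zero (Set.toFinite _)).1 hk
      subst hbot
      have hbij : Function.Bijective ((⊥ : SimpleGraph V).connectedComponentMk) := by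
        constructor
        · intro u v huv
          exact SimpleGraph.reachable_bot.1 (SimpleGraph.ConnectedComponent.exact huv)
        · intro C
          exact C.exists_rep
      have h5 : Nat.card V = Nat.card (⊥ : SimpleGraph V).ConnectedComponent :=
        Nat.card_eq_of_bijective _ hbij
      have h6 : Nat.card V = Fintype.card V := Nat.card_eq_fintype_card
      omega
    · obtain ⟨e, he⟩ : F.edgeSet.Nonempty := by
        rw [Set.nonempty_iff_ne_empty]
        intro hcon
        rw [hcon] at hk
        simp at hk
        omega
      revert he
      refine Sym2.inductionOn e ?_
      intro u v he
      · have huv : F.Adj u v := he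
        set F' : SimpleGraph V := F \ SimpleGraph.fromEdgeSet {s(u, v)} with hF'def
        have hle : F' ≤ F := sdiff_le
        have hacy : F'.IsAcyclic := fun _ w hw => hF (w.mapLe hle) (hw.mapLe hle)
        have hes : F'.edgeSet = F.edgeSet \ {s(u, v)} := by
          rw [hF'def, SimpleGraph.edgeSet_sdiff, SimpleGraph.edgeSet_fromEdgeSet,
            SimpleGraph.edgeSet_sdiff_sdiff_isDiag]
        have hcard : F'.edgeSet.ncard = k - 1 := by
          rw [hes, Set.ncard_diff_singleton_of_mem he, hk]
        have hbridge : ¬ F'.Reachable u v :=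
          fun h => (SimpleGraph.isAcyclic_iff_forall_adj_isBridge.1 hF huv) h
        have hcc : Nat.card F.ConnectedComponent + 1 ≤ Nat.card F'.ConnectedComponent := by
          apply card_surj_lt (SimpleGraph.ConnectedComponent.map
            (SimpleGraph.Hom.ofLE hle))
            (fun C => C.ind (fun w => ⟨F'.connectedComponentMk w, rfl⟩))
            (a₁ := F'.connectedComponentMk u) (a₂ := F'.connectedComponentMk v)
          · intro h
            exact hbridge (SimpleGraph.ConnectedComponent.exact h)
          · exact SimpleGraph.ConnectedComponent.eq.2 huv.reachable
        have hk1 : k - 1 < k := by omega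
        have := ih (k - 1) hk1 F' hacy hcard
        omega

lemma acyclic_card_le (F : SimpleGraph V) (hF : F.IsAcyclic) :
    F.edgeFinset.card ≤ Fintype.card V - 1 := by
  have hcv : F.edgeFinset.card = F.edgeSet.ncard := (Set.ncard_eq_toFinset_card' _).symm
  cases isEmpty_or_nonempty V with
  | inl h =>
    have hse : IsEmpty (Sym2 V) := ⟨fun e => Sym2.ind (fun a _ => h.elim a) e⟩
    rw [Finset.eq_empty_of_isEmpty F.edgeFinset]
    simp
  | inr h =>
    have h1 : 1 ≤ Nat.card F.ConnectedComponent := by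
      have : Nonempty F.ConnectedComponent := ⟨F.connectedComponentMk (Classical.arbitrary V)⟩
      exact Nat.card_pos
    have := acyclic_aux F.edgeSet.ncard F hF rfl
    omega


lemma matching_subset {M N : Finset (Sym2 V)} (h : N ⊆ M) (hM : IsMatchingSet M) :
    IsMatchingSet N :=
  ⟨fun e he => hM.1 e (h he), fun e he f hf hne v hv => hM.2 e (h he) f (h hf) hne v hv⟩

variable (c : Sym2 V → ℕ)

noncomputable def deg (G' : SimpleGraph V) (k : ℕ) : ℕ :=
  ((G'.edgeFinset).filter (fun e => c e = k)).card

noncomputable def mass (G' : SimpleGraph V) (P : Finset ℕ) : ℕ := ∑ k ∈ P, deg c G' k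

lemma edge_in_top {G' : SimpleGraph V} {e : Sym2 V} (he : e ∈ G'.edgeSet) :
    e ∈ (⊤ : SimpleGraph V).edgeSet := by
  rw [SimpleGraph.edgeSet_top]
  exact SimpleGraph.not_isDiag_of_mem_edgeSet _ he

lemma exists_valid (G' : SimpleGraph V) (m : ℕ) (pool : Finset ℕ) (M : Finset (Sym2 V))
    (hMcard : M.card ≤ m - 1)
    (hmass : 4 * (m - 1) * (Fintype.card V - 1) + 1 ≤ mass c G' pool) :
    ∃ k ∈ pool, 1 ≤ deg c G' k ∧
      2 * (((G'.edgeFinset).filter (fun e => c e = k)).filter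
          (fun e => ∃ v, v ∈ e ∧ ∃ f ∈ M, v ∈ f)).card ≤ deg c G' k := by
  by_contra hcon
  push_neg at hcon
  have hkey : ∀ k ∈ pool, deg c G' k ≤
      2 * (((G'.edgeFinset).filter (fun e => c e = k)).filter
          (fun e => ∃ v, v ∈ e ∧ ∃ f ∈ M, v ∈ f)).card := by
    intro k hk
    rcases Nat.eq_zero_or_pos (deg c G' k) with h0 | h1
    · omega
    · have := hcon k hk h1; omega
  set S : Finset V := M.biUnion (fun f => Finset.univ.filter (· ∈ f)) with hS
  have hScard : S.card ≤ 2 * M.card := by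
    calc S.card ≤ ∑ f ∈ M, (Finset.univ.filter (· ∈ f)).card := Finset.card_biUnion_le
      _ ≤ ∑ _f ∈ M, 2 := Finset.sum_le_sum (fun f _ => verts_of_edge_card_le f)
      _ = 2 * M.card := by rw [Finset.sum_const]; ring
  have hsum : ∑ k ∈ pool, (((G'.edgeFinset).filter (fun e => c e = k)).filter
      (fun e => ∃ v, v ∈ e ∧ ∃ f ∈ M, v ∈ f)).card
      ≤ ((G'.edgeFinset).filter (fun e => ∃ v ∈ S, v ∈ e)).card := by
    rw [← Finset.card_biUnion]
    · apply Finset.card_le_card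
      intro e he
      obtain ⟨k, _, he'⟩ := Finset.mem_biUnion.1 he
      obtain ⟨he1, htouch⟩ := Finset.mem_filter.1 he'
      obtain ⟨he2, _⟩ := Finset.mem_filter.1 he1
      obtain ⟨v, hv, f, hf, hvf⟩ := htouch
      exact Finset.mem_filter.2 ⟨he2,
        ⟨v, Finset.mem_biUnion.2 ⟨f, hf, Finset.mem_filter.2 ⟨Finset.mem_univ _, hvf⟩⟩, hv⟩⟩
    · intro k1 h1 k2 h2 hne
      rw [Function.onFun, Finset.disjoint_left]
      intro e he1 he2
      have e1 := (Finset.mem_filter.1 (Finset.mem_filter.1 he1).1).2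
      have e2 := (Finset.mem_filter.1 (Finset.mem_filter.1 he2).1).2
      exact hne (e1.symm.trans e2)
  have hfinal : mass c G' pool ≤ 4 * (m - 1) * (Fintype.card V - 1) := by
    have h1 : mass c G' pool ≤ 2 * ∑ k ∈ pool, (((G'.edgeFinset).filter (fun e => c e = k)).filter
        (fun e => ∃ v, v ∈ e ∧ ∃ f ∈ M, v ∈ f)).card := by
      rw [Finset.mul_sum]
      exact Finset.sum_le_sum hkey
    have h2 := touch_card_le G' S
    have h3 : S.card * (Fintype.card V - 1) ≤ (2 * (m - 1)) * (Fintype.card V - 1) := by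
      apply Nat.mul_le_mul_right
      omega
    calc mass c G' pool ≤ 2 * ((G'.edgeFinset).filter (fun e => ∃ v ∈ S, v ∈ e)).card := by
          refine h1.trans ?_
          exact Nat.mul_le_mul_left 2 hsum
      _ ≤ 2 * ((2 * (m - 1)) * (Fintype.card V - 1)) := by
          apply Nat.mul_le_mul_left
          exact h2.trans h3
      _ = 4 * (m - 1) * (Fintype.card V - 1) := by ring
  omega

lemma grow (G' : SimpleGraph V) (hproper : ProperColoring (⊤ : SimpleGraph V) c) (m : ℕ)
    (pool : Finset ℕ) (hpool : ∀ k ∈ pool, deg c G' k < m) :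
    ∀ (fuel : ℕ) (C : Finset ℕ) (M : Finset (Sym2 V)),
      C ⊆ pool → (∀ e ∈ M, e ∈ G'.edgeFinset) → (∀ e ∈ M, c e ∈ C) → IsMatchingSet M →
      mass c G' C ≤ 2 * M.card → M.card < m → m - M.card ≤ fuel →
      4 * (m - 1) * (Fintype.card V - 1) + 2 * (m - 1) + 1 ≤ mass c G' pool →
      ∃ C' M', C' ⊆ pool ∧ mass c G' C' ≤ 3 * (m - 1) ∧
        (∀ e ∈ M', e ∈ G'.edgeFinset) ∧ (∀ e ∈ M', c e ∈ C') ∧ IsMatchingSet M' ∧ m ≤ M'.card := by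
  intro fuel
  induction fuel with
  | zero => intro _ _ _ _ _ _ _ hlt hfuel _; omega
  | succ fuel ih =>
    intro C M hCpool hMG hMC hMmatch hmassC hMlt hfuel hmass
    have hCmass_le : mass c G' C ≤ 2 * (m - 1) := by omega
    have hsplit : mass c G' (pool \ C) + mass c G' C = mass c G' pool :=
      Finset.sum_sdiff hCpool
    have hmass' : 4 * (m - 1) * (Fintype.card V - 1) + 1 ≤ mass c G' (pool \ C) := by omega
    obtain ⟨k, hkpool, hdeg1, hmeet⟩ :=
      exists_valid c G' m (pool \ C) M (by omega) hmass'
    have hkP : k ∈ pool := (Finset.mem_sdiff.1 hkpool).1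
    have hkC : k ∉ C := (Finset.mem_sdiff.1 hkpool).2
    set B : Finset (Sym2 V) := (G'.edgeFinset).filter (fun e => c e = k) with hB
    set Φ : Finset (Sym2 V) :=
      B.filter (fun e => ¬ ∃ v, v ∈ e ∧ ∃ f ∈ M, v ∈ f) with hΦ
    have hsplitdeg : (B.filter (fun e => ∃ v, v ∈ e ∧ ∃ f ∈ M, v ∈ f)).card + Φ.card
        = deg c G' k := Finset.card_filter_add_card_filter_not _
    have hΦ2 : deg c G' k ≤ 2 * Φ.card := by omega
    have hΦ1 : 1 ≤ Φ.card := by omega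
    have hΦG : ∀ e ∈ Φ, e ∈ G'.edgeFinset := fun e he =>
      (Finset.mem_filter.1 (Finset.mem_filter.1 he).1).1
    have hΦcol : ∀ e ∈ Φ, c e = k := fun e he =>
      (Finset.mem_filter.1 (Finset.mem_filter.1 he).1).2
    have hΦav : ∀ e ∈ Φ, ¬ ∃ v, v ∈ e ∧ ∃ f ∈ M, v ∈ f := fun e he =>
      (Finset.mem_filter.1 he).2
    have hΦmatch : IsMatchingSet Φ := by
      apply colour_matching hproper
      · intro e he
        exact edge_in_top (SimpleGraph.mem_edgeFinset.1 (hΦG e he))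
      · intro e he f hf
        rw [hΦcol e he, hΦcol f hf]
    have hdisjMΦ : ∀ Φ' ⊆ Φ, Disjoint M Φ' := by
      intro Φ' hsub
      rw [Finset.disjoint_left]
      intro e heM heΦ
      exact hΦav e (hsub heΦ) ⟨e.out.1, Sym2.out_fst_mem e, e, heM, Sym2.out_fst_mem e⟩
    have hmatch_union : ∀ Φ' ⊆ Φ, IsMatchingSet (M ∪ Φ') := by
      intro Φ' hsub
      constructor
      · intro e he
        rcases Finset.mem_union.1 he with h | h
        · exact hMmatch.1 e h
        · exact SimpleGraph.not_isDiag_of_mem_edgeSet _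
            (SimpleGraph.mem_edgeFinset.1 (hΦG e (hsub h)))
      · intro e he f hf hne v hv hvf
        rcases Finset.mem_union.1 he with heM | heΦ <;> rcases Finset.mem_union.1 hf with hfM | hfΦ
        · exact hMmatch.2 e heM f hfM hne v hv hvf
        · exact hΦav f (hsub hfΦ) ⟨v, hvf, e, heM, hv⟩
        · exact hΦav e (hsub heΦ) ⟨v, hv, f, hfM, hvf⟩
        · exact hΦmatch.2 e (hsub heΦ) f (hsub hfΦ) hne v hv hvf
    rcases le_or_gt (m - M.card) Φ.card with hbig | hsmallΦ
    · obtain ⟨Φ', hΦ'sub, hΦ'card⟩ := Finset.exists_subset_card_eq hbig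
      refine ⟨insert k C, M ∪ Φ', Finset.insert_subset hkP hCpool, ?_, ?_, ?_,
        hmatch_union Φ' hΦ'sub, ?_⟩
      · rw [mass, Finset.sum_insert hkC]
        have hdegk_lt : deg c G' k < m := hpool k hkP
        have : mass c G' C = ∑ x ∈ C, deg c G' x := rfl
        omega
      · intro e he
        rcases Finset.mem_union.1 he with h | h
        · exact hMG e h
        · exact hΦG e (hΦ'sub h)
      · intro e he
        rcases Finset.mem_union.1 he with h | h
        · exact Finset.mem_insert_of_mem (hMC e h)
        · rw [hΦcol e (hΦ'sub h)]; exact Finset.mem_insert_self _ _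
      · rw [Finset.card_union_of_disjoint (hdisjMΦ Φ' hΦ'sub)]
        omega
    · have hkdeg_lt : deg c G' k < m := hpool k hkP
      have hcardU : (M ∪ Φ).card = M.card + Φ.card :=
        Finset.card_union_of_disjoint (hdisjMΦ Φ (le_refl _))
      apply ih (insert k C) (M ∪ Φ) (Finset.insert_subset hkP hCpool)
      · intro e he
        rcases Finset.mem_union.1 he with h | h
        · exact hMG e h
        · exact hΦG e h
      · intro e he
        rcases Finset.mem_union.1 he with h | h
        · exact Finset.mem_insert_of_mem (hMC e h)
        · rw [hΦcol e h]; exact Finset.mem_insert_self _ _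
      · exact hmatch_union Φ (le_refl _)
      · rw [mass, Finset.sum_insert hkC, hcardU]
        have : mass c G' C = ∑ x ∈ C, deg c G' x := rfl
        omega
      · omega
      · omega
      · exact hmass

lemma extract (G' : SimpleGraph V) (hproper : ProperColoring (⊤ : SimpleGraph V) c) (m : ℕ) :
    ∀ (q : ℕ) (pool : Finset ℕ), (∀ k ∈ pool, deg c G' k < m) →
    3 * (m - 1) * q + (4 * (m - 1) * (Fintype.card V - 1) + 2 * (m - 1) + 1) ≤ mass c G' pool →
    ∃ C : Fin q → Finset ℕ, (∀ i, C i ⊆ pool) ∧ (∀ i j, i ≠ j → Disjoint (C i) (C j)) ∧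
      ∀ i, ∃ M : Finset (Sym2 V), (∀ e ∈ M, e ∈ G'.edgeFinset) ∧ (∀ e ∈ M, c e ∈ C i) ∧
        IsMatchingSet M ∧ m ≤ M.card := by
  intro q
  induction q with
  | zero =>
    intro pool _ _
    exact ⟨fun i => i.elim0, fun i => i.elim0, fun i => i.elim0, fun i => i.elim0⟩
  | succ q ih =>
    intro pool hpool hmass
    have hpoolne : pool.Nonempty := by
      rcases Finset.eq_empty_or_nonempty pool with rfl | h
      · exfalso; rw [mass, Finset.sum_empty] at hmass; omega
      · exact h
    obtain ⟨k0, hk0⟩ := hpoolne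
    have hm0 : 0 < m := lt_of_le_of_lt (Nat.zero_le _) (hpool k0 hk0)
    obtain ⟨C₀, M₀, hC₀pool, hC₀mass, hM₀G, hM₀C, hM₀match, hM₀card⟩ :=
      grow c G' hproper m pool hpool m ∅ ∅ (Finset.empty_subset _)
        (fun e he => (Finset.notMem_empty e he).elim)
        (fun e he => (Finset.notMem_empty e he).elim)
        ⟨fun e he => (Finset.notMem_empty e he).elim,
         fun e he => (Finset.notMem_empty e he).elim⟩
        (by simp [mass]) hm0 (by simp) (by omega)
    have hsd : mass c G' (pool \ C₀) + mass c G' C₀ = mass c G' pool :=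
      Finset.sum_sdiff hC₀pool
    obtain ⟨C, hCsub, hCdisj, hCwit⟩ := ih (pool \ C₀)
      (fun k hk => hpool k (Finset.mem_sdiff.1 hk).1)
      (by have hq : 3 * (m - 1) * (q + 1) = 3 * (m - 1) * q + 3 * (m - 1) := by ring
          omega)
    refine ⟨fun i => if h : i = 0 then C₀ else C (i.pred h), ?_, ?_, ?_⟩
    · intro i
      by_cases h : i = 0
      · simp only [dif_pos h]; exact hC₀pool
      · simp only [dif_neg h]; exact (hCsub _).trans Finset.sdiff_subset
    · intro i j hne
      by_cases hi : i = 0 <;> by_cases hj : j = 0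
      · exact absurd (hi.trans hj.symm) hne
      · simp only [dif_pos hi, dif_neg hj]
        rw [Finset.disjoint_left]
        intro x hx hx'
        exact (Finset.mem_sdiff.1 (hCsub _ hx')).2 hx
      · simp only [dif_neg hi, dif_pos hj]
        rw [Finset.disjoint_left]
        intro x hx hx'
        exact (Finset.mem_sdiff.1 (hCsub _ hx)).2 hx'
      · simp only [dif_neg hi, dif_neg hj]
        apply hCdisj
        intro hpe
        exact hne (by rwa [Fin.pred_inj] at hpe)
    · intro i
      by_cases h : i = 0
      · simp only [dif_pos h]
        exact ⟨M₀, hM₀G, hM₀C, hM₀match, hM₀card⟩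
      · simp only [dif_neg h]
        exact hCwit _







lemma rich_mono {G : SimpleGraph V} {c : Sym2 V → ℕ} {β : ℝ} {U U' : Set ℕ} (h : U ⊆ U')
    (hr : RichClass G c β U) : RichClass G c β U' := by
  obtain ⟨M, h1, h2, h3, h4⟩ := hr
  exact ⟨M, h1, fun e he => h (h2 e he), h3, h4⟩

lemma no_edges_of_subsingleton (G : SimpleGraph V) (h : Fintype.card V ≤ 1) {e : Sym2 V}
    (he : e ∈ G.edgeSet) : False := by
  have hsub : Subsingleton V := Fintype.card_le_one_iff_subsingleton.1 h
  have hd := SimpleGraph.not_isDiag_of_mem_edgeSet _ he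
  apply hd
  refine Sym2.inductionOn e (fun x y => ?_)
  exact Sym2.mk_isDiag_iff.2 (Subsingleton.elim x y)

lemma assemble (G' : SimpleGraph V) (c : Sym2 V → ℕ) (β : ℝ)
    (W : Fin (Fintype.card V - 1) → Finset ℕ)
    (hdis : ∀ i j, i ≠ j → Disjoint (W i) (W j))
    (hrich : ∀ i, RichClass G' c β ↑(W i)) : WellColoured G' c β := by
  rcases Nat.eq_zero_or_pos (Fintype.card V - 1) with h0 | hpos
  · refine ⟨fun _ => ∅, ?_, ?_, ?_⟩
    · intro i; exact absurd i.isLt (by omega)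
    · intro i; exact absurd i.isLt (by omega)
    · intro e he
      exact (no_edges_of_subsingleton G' (by omega) he).elim
  · set i₀ : Fin (Fintype.card V - 1) := ⟨0, hpos⟩ with hi₀
    refine ⟨fun i => if i = i₀ then {x | ∀ j, j ≠ i₀ → x ∉ W j} else ↑(W i), ?_, ?_, ?_⟩
    · intro i j hne
      by_cases hi : i = i₀ <;> by_cases hj : j = i₀
      · exact absurd (hi.trans hj.symm) hne
      · simp only [if_pos hi, if_neg hj]
        rw [Set.disjoint_left]
        intro x hx hx'
        exact hx j hj (Finset.mem_coe.1 hx')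
      · simp only [if_neg hi, if_pos hj]
        rw [Set.disjoint_left]
        intro x hx hx'
        exact hx' i hi (Finset.mem_coe.1 hx)
      · simp only [if_neg hi, if_neg hj]
        exact Finset.disjoint_coe.2 (hdis i j hne)
    · intro i
      by_cases hi : i = i₀
      · simp only [if_pos hi]
        refine rich_mono ?_ (hrich i₀)
        intro x hx
        intro j hj hxj
        exact (Finset.disjoint_left.1 (hdis i₀ j (fun h => hj h.symm)) (Finset.mem_coe.1 hx)) hxj
      · simp only [if_neg hi]; exact hrich i
    · intro e he
      by_cases hx : ∃ j, j ≠ i₀ ∧ c e ∈ W j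
      · obtain ⟨j, hj, hmem⟩ := hx
        exact ⟨j, by simp only [if_neg hj]; exact hmem⟩
      · push_neg at hx
        exact ⟨i₀, by simp only [if_pos rfl]; exact fun j hj => hx j hj⟩

lemma empty_matching {M : Finset (Sym2 V)} (h : M = ∅) : IsMatchingSet M := by
  subst h
  exact ⟨fun e he => (Finset.notMem_empty e he).elim,
    fun e he => (Finset.notMem_empty e he).elim⟩

lemma wellColoured_of_nonpos (G' : SimpleGraph V) (c : Sym2 V → ℕ) (β : ℝ)
    (hβ : β * (Fintype.card V : ℝ) ≤ 0) : WellColoured G' c β := by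
  apply assemble G' c β (fun i => {(i : ℕ)})
  · intro i j hne
    rw [Finset.disjoint_singleton]
    exact fun h => hne (Fin.val_injective h)
  · intro i
    refine ⟨∅, by simp, fun e he => (Finset.notMem_empty e he).elim,
      empty_matching rfl, by simpa using hβ⟩

lemma wellColoured_top_small (c : Sym2 V → ℕ) (hproper : ProperColoring (⊤ : SimpleGraph V) c)
    (β : ℝ) (hβ1 : β * (Fintype.card V : ℝ) ≤ 1) : WellColoured (⊤ : SimpleGraph V) c β := by
  rcases le_or_gt (Fintype.card V) 1 with hn | hn
  · apply assemble _ c β (fun _ => (∅ : Finset ℕ))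
    · intro i j _; simp
    · intro i
      exact absurd i.isLt (by omega)
  · have hnon : Nonempty V := Fintype.card_pos_iff.1 (by omega)
    obtain ⟨v⟩ := hnon
    have hcard : (Finset.univ.erase v).card = Fintype.card V - 1 := by
      rw [Finset.card_erase_of_mem (Finset.mem_univ _), Finset.card_univ]
    set f : Fin (Fintype.card V - 1) → {x // x ∈ Finset.univ.erase v} :=
      fun i => (Finset.univ.erase v).equivFin.symm (finCongr hcard.symm i) with hf
    have hfinj : Function.Injective f := fun i j hij => by
      have := (Finset.univ.erase v).equivFin.symm.injective hij
      simpa using (finCongr hcard.symm).injective this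
    have hfv : ∀ i, (f i : V) ≠ v := fun i => (Finset.mem_erase.1 (f i).2).1
    have hadj : ∀ i, (⊤ : SimpleGraph V).Adj v (f i : V) :=
      fun i => by rw [SimpleGraph.top_adj]; exact (hfv i).symm
    apply assemble _ c β (fun i => {c s(v, (f i : V))})
    · intro i j hne
      rw [Finset.disjoint_singleton]
      apply hproper (hadj i) (hadj j)
      intro h
      exact hne (hfinj (Subtype.coe_injective h))
    · intro i
      refine ⟨{s(v, (f i : V))}, ?_, ?_, ?_, ?_⟩
      · intro e he
        rw [Finset.mem_coe, Finset.mem_singleton] at he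
        subst he
        exact hadj i
      · intro e he
        rw [Finset.mem_singleton] at he
        subst he
        simp
      · constructor
        · intro e he
          rw [Finset.mem_singleton] at he
          subst he
          rw [Sym2.mk_isDiag_iff]
          exact (hfv i).symm
        · intro e he g hg hne
          rw [Finset.mem_singleton] at he hg
          exact absurd (he.trans hg.symm) hne
      · rw [Finset.card_singleton]
        exact hβ1.trans (by norm_num)


end Stmt3Aux
namespace Stmt3Aux
open Finset SimpleGraph
set_option linter.unusedSectionVars false
set_option maxHeartbeats 4000000

variable {V : Type*} [Fintype V] [DecidableEq V]

noncomputable def richF (c : Sym2 V → ℕ) (α : ℝ) : Finset ℕ :=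
  ((⊤ : SimpleGraph V).edgeFinset.image c).filter
    (fun k => RichClass (⊤ : SimpleGraph V) c α {k})

lemma deg_def (c : Sym2 V → ℕ) (G : SimpleGraph V) (k : ℕ) :
    deg c G k = ((G.edgeFinset).filter (fun e => c e = k)).card := rfl

lemma rich_single (G' : SimpleGraph V) (c : Sym2 V → ℕ)
    (hproper : ProperColoring (⊤ : SimpleGraph V) c) {β : ℝ} {k : ℕ}
    (h : β * (Fintype.card V : ℝ) ≤ (deg c G' k : ℝ)) :
    RichClass G' c β {k} := by
  rw [deg_def] at h
  refine ⟨(G'.edgeFinset).filter (fun e => c e = k), ?_, ?_, ?_, h⟩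
  · intro e he
    rw [Finset.mem_coe, Finset.mem_filter] at he
    exact SimpleGraph.mem_edgeFinset.1 he.1
  · intro e he
    rw [Finset.mem_filter] at he
    exact he.2
  · apply colour_matching hproper
    · intro e he
      exact edge_in_top (SimpleGraph.mem_edgeFinset.1 (Finset.mem_filter.1 he).1)
    · intro e he f hf
      rw [(Finset.mem_filter.1 he).2, (Finset.mem_filter.1 hf).2]

lemma edgeFinset_card_congr (G : SimpleGraph V) (i1 i2 : Fintype G.edgeSet) :
    (@SimpleGraph.edgeFinset V G i1).card = (@SimpleGraph.edgeFinset V G i2).card := by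
  cases Subsingleton.elim i1 i2
  rfl

lemma deleted_well (c : Sym2 V → ℕ) (α β : ℝ) (hα : 0 < α) (hα' : α ≤ 1 / 8)
    (hβ : β ≤ α / 4)
    (hproper : ProperColoring (⊤ : SimpleGraph V) c)
    (hβn1 : 1 ≤ β * (Fintype.card V : ℝ))
    (hS : ((richF c α).card : ℝ) <
      (Fintype.card V : ℝ) - 16 * β * (Fintype.card V : ℝ))
    (G0 G' : SimpleGraph V) (hG0 : G0 = ⊤)
    (hG'subS : G'.edgeSet ⊆ G0.edgeSet)
    (hEcardS : G0.edgeSet.ncard ≤ G'.edgeSet.ncard +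
      ⌊β * (Fintype.card V : ℝ)⌋₊ * (Fintype.card V - 1))
    (hloss : ∀ k, deg c G0 k ≤ deg c G' k + ⌊β * (Fintype.card V : ℝ)⌋₊) :
    WellColoured G' c β := by
  set N : ℝ := (Fintype.card V : ℝ) with hN
  set m : ℕ := ⌈β * N⌉₊ with hm
  set t : ℕ := ⌊β * N⌋₊ with ht
  have hG'sub : G'.edgeFinset ⊆ G0.edgeFinset := fun e he =>
    SimpleGraph.mem_edgeFinset.2 (hG'subS (SimpleGraph.mem_edgeFinset.1 he))
  have hncG0 : G0.edgeSet.ncard = G0.edgeFinset.card := Set.ncard_eq_toFinset_card' _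
  have hncG' : G'.edgeSet.ncard = G'.edgeFinset.card := Set.ncard_eq_toFinset_card' _
  have hEcard : G0.edgeFinset.card ≤ G'.edgeFinset.card + t * (Fintype.card V - 1) := by
    rw [← hncG0, ← hncG']
    exact hEcardS
  -- real basics
  have hβ32 : β ≤ 1 / 32 := by linarith
  have hβpos : 0 < β := by
    by_contra h
    push_neg at h
    have hN0 : (0:ℝ) ≤ N := Nat.cast_nonneg _
    nlinarith
  have hNpos : 0 < N := by nlinarith
  have hN32 : (32:ℝ) ≤ N := by nlinarith
  have hn1 : 1 ≤ Fintype.card V := by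
    have h1 : (1:ℝ) ≤ ((Fintype.card V : ℕ) : ℝ) := by rw [← hN]; linarith
    exact_mod_cast h1
  have hm1 : 1 ≤ m := Nat.one_le_ceil_iff.2 (by nlinarith)
  have hmge : β * N ≤ (m : ℝ) := Nat.le_ceil _
  have hmle : (m : ℝ) ≤ β * N + 1 := (Nat.ceil_lt_add_one (by positivity)).le
  have htle : (t : ℝ) ≤ β * N := Nat.floor_le (by positivity)
  -- edge counts
  have hEtop : G0.edgeFinset.card = (Fintype.card V).choose 2 := by
    subst hG0
    rw [← SimpleGraph.card_edgeFinset_top_eq_card_choose_two (V := V)]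
    exact edgeFinset_card_congr _ _ _
  -- colour class decomposition
  set K : Finset ℕ := G'.edgeFinset.image c with hK
  have hsumK : mass c G' K = G'.edgeFinset.card :=
    (Finset.card_eq_sum_card_fiberwise (fun e he => Finset.mem_image_of_mem c he)).symm
  have hK_mem : ∀ k : ℕ, 1 ≤ deg c G' k → k ∈ K := by
    intro k hk
    rw [deg_def] at hk
    obtain ⟨e, he⟩ := Finset.card_pos.1 hk
    obtain ⟨he1, he2⟩ := Finset.mem_filter.1 he
    exact Finset.mem_image.2 ⟨e, he1, he2⟩
  have hd_le_orig : ∀ k, deg c G' k ≤ deg c G0 k := fun k => by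
    rw [deg_def, deg_def]
    exact Finset.card_le_card (Finset.filter_subset_filter _ hG'sub)
  have horig_matching : ∀ k : ℕ,
      IsMatchingSet ((G0.edgeFinset).filter (fun e => c e = k)) := by
    intro k
    apply colour_matching hproper
    · intro e he
      exact edge_in_top (SimpleGraph.mem_edgeFinset.1 (Finset.mem_filter.1 he).1)
    · intro e he f hf
      rw [(Finset.mem_filter.1 he).2, (Finset.mem_filter.1 hf).2]
  have horig_le : ∀ k, 2 * deg c G0 k ≤ Fintype.card V := fun k => by
    rw [deg_def]
    exact matching_card_le (horig_matching k)
  -- rich colours have large original classes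
  have hrich_lb : ∀ k ∈ richF c α, α * N ≤ (deg c G0 k : ℝ) := by
    intro k hk
    obtain ⟨M, hM1, hM2, _hM3, hM4⟩ := (Finset.mem_filter.1 hk).2
    have hMsub : M ⊆ (G0.edgeFinset).filter (fun e => c e = k) := by
      intro e he
      refine Finset.mem_filter.2 ⟨?_, Set.mem_singleton_iff.1 (hM2 e he)⟩
      simp only [SimpleGraph.mem_edgeFinset]
      rw [hG0]
      exact hM1 he
    refine hM4.trans ?_
    rw [deg_def]
    exact_mod_cast Finset.card_le_card hMsub
  have hnotrich_ub : ∀ k, k ∉ richF c α → 1 ≤ deg c G' k →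
      (deg c G0 k : ℝ) < α * N := by
    intro k hk h1
    by_contra hge
    push_neg at hge
    apply hk
    apply Finset.mem_filter.2
    constructor
    · rw [deg_def] at h1
      obtain ⟨e, he⟩ := Finset.card_pos.1 h1
      obtain ⟨he1, he2⟩ := Finset.mem_filter.1 he
      refine Finset.mem_image.2 ⟨e, ?_, he2⟩
      simp only [SimpleGraph.mem_edgeFinset]
      have := hG'subS (SimpleGraph.mem_edgeFinset.1 he1)
      rwa [hG0] at this
    · have hge' : α * (Fintype.card V : ℝ) ≤ (deg c (⊤ : SimpleGraph V) k : ℝ) := by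
        rw [← hG0]
        exact hge
      exact rich_single (⊤ : SimpleGraph V) c hproper hge'
  -- rich colours are good
  set good : Finset ℕ := K.filter (fun k => m ≤ deg c G' k) with hgood
  have hdeg_rich : ∀ k ∈ richF c α, (3 : ℝ) * (β * N) ≤ (deg c G' k : ℝ) := by
    intro k hk
    have h1 := hrich_lb k hk
    have h2 := hloss k
    have h2' : (deg c G0 k : ℝ) ≤ (deg c G' k : ℝ) + t := by exact_mod_cast h2

    have h4 : 4 * (β * N) ≤ α * N := by nlinarith
    linarith
  have hrich_good : richF c α ⊆ good := by
    intro k hk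
    have h3 := hdeg_rich k hk
    have hmdeg : (m : ℝ) ≤ (deg c G' k : ℝ) := by nlinarith
    have hmdeg' : m ≤ deg c G' k := by exact_mod_cast hmdeg
    exact Finset.mem_filter.2 ⟨hK_mem k (by omega), hmdeg'⟩
  have hgoodK : good ⊆ K := Finset.filter_subset _ _
  -- the two cases
  rcases le_or_gt (Fintype.card V - 1) good.card with hA | hB
  · -- many good colours: n-1 singleton classes
    obtain ⟨good', hg'sub, hg'card⟩ := Finset.exists_subset_card_eq hA
    set fA : Fin (Fintype.card V - 1) → {x // x ∈ good'} :=
      fun i => good'.equivFin.symm (finCongr hg'card.symm i) with hfA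
    have hfAinj : Function.Injective fA := fun i j hij => by
      have := good'.equivFin.symm.injective hij
      simpa using (finCongr hg'card.symm).injective this
    apply assemble G' c β (fun i => {(fA i : ℕ)})
    · intro i j hne
      rw [Finset.disjoint_singleton]
      intro h
      exact hne (hfAinj (Subtype.coe_injective h))
    · intro i
      have hkgood : (fA i : ℕ) ∈ good := hg'sub (fA i).2
      have hmdeg : m ≤ deg c G' (fA i : ℕ) := (Finset.mem_filter.1 hkgood).2
      have hrich : β * N ≤ (deg c G' (fA i : ℕ) : ℝ) := by
        refine hmge.trans ?_
        exact_mod_cast hmdeg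
      simpa using rich_single G' c hproper hrich
  · -- few good colours : need tiny classes
    set r : ℕ := (richF c α).card with hr
    set g : ℕ := good.card with hg
    set s : ℕ := (good \ richF c α).card with hs
    set q : ℕ := (Fintype.card V - 1) - g with hq
    have hrg : r ≤ g := Finset.card_le_card hrich_good
    have hsrg : s + r = g := by
      rw [hs, Finset.card_sdiff_of_subset hrich_good]
      omega
    set tiny : Finset ℕ := K \ good with htiny
    have htiny_lt : ∀ k ∈ tiny, deg c G' k < m := by
      intro k hk
      obtain ⟨hk1, hk2⟩ := Finset.mem_sdiff.1 hk
      by_contra hc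
      push_neg at hc
      exact hk2 (Finset.mem_filter.2 ⟨hk1, hc⟩)
    have hTsum : mass c G' tiny + mass c G' good = mass c G' K := Finset.sum_sdiff hgoodK
    have hgoodsplit : mass c G' (good \ richF c α) + mass c G' (richF c α) = mass c G' good :=
      Finset.sum_sdiff hrich_good
    -- real bounds on the parts
    have hrichmass : (mass c G' (richF c α) : ℝ) ≤ (r : ℝ) * (N / 2) := by
      rw [mass, Nat.cast_sum]
      calc ∑ k ∈ richF c α, (deg c G' k : ℝ) ≤ ∑ _k ∈ richF c α, N / 2 := by
            apply Finset.sum_le_sum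
            intro k _
            have h2 := horig_le k
            have h3 : 2 * (deg c G0 k : ℝ) ≤ N := by rw [hN]; exact_mod_cast h2
            have h4 : (deg c G' k : ℝ) ≤ (deg c G0 k : ℝ) := by
              exact_mod_cast hd_le_orig k
            linarith
        _ = (r : ℝ) * (N / 2) := by rw [Finset.sum_const, nsmul_eq_mul]
    have hsmass : (mass c G' (good \ richF c α) : ℝ) ≤ (s : ℝ) * (α * N) := by
      rw [mass, Nat.cast_sum]
      calc ∑ k ∈ good \ richF c α, (deg c G' k : ℝ)
          ≤ ∑ _k ∈ good \ richF c α, α * N := by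
            apply Finset.sum_le_sum
            intro k hk
            obtain ⟨hk1, hk2⟩ := Finset.mem_sdiff.1 hk
            have hmk : m ≤ deg c G' k := (Finset.mem_filter.1 hk1).2
            have h1 := hnotrich_ub k hk2 (by omega)
            have h2 : (deg c G' k : ℝ) ≤ (deg c G0 k : ℝ) := by
              exact_mod_cast hd_le_orig k
            linarith
        _ = (s : ℝ) * (α * N) := by rw [Finset.sum_const, nsmul_eq_mul]
    -- global lower bound on edges of G'
    have hE : N * (N - 1) / 2 - β * N * (N - 1) ≤ (G'.edgeFinset.card : ℝ) := by
      have h1 : ((Fintype.card V).choose 2 : ℝ) = N * (N - 1) / 2 := by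
        rw [Nat.cast_choose_two]
      have h2 : (G0.edgeFinset.card : ℝ) ≤
          (G'.edgeFinset.card : ℝ) + (t : ℝ) * (N - 1) := by
        calc (G0.edgeFinset.card : ℝ)
            ≤ ((G'.edgeFinset.card + t * (Fintype.card V - 1) : ℕ) : ℝ) := by
              exact_mod_cast hEcard
          _ = (G'.edgeFinset.card : ℝ) + (t : ℝ) * (N - 1) := by
              push_cast [Nat.cast_sub hn1]
              ring
      have h3 : (N * (N - 1) / 2 : ℝ) = (G0.edgeFinset.card : ℝ) := by
        rw [hEtop, h1]
      have h4 : (t : ℝ) * (N - 1) ≤ β * N * (N - 1) := by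
        apply mul_le_mul_of_nonneg_right htle
        linarith
      linarith
    -- the key arithmetic bound on the tiny mass
    have hmassT_ge : 3 * (m - 1) * q + (4 * (m - 1) * (Fintype.card V - 1) + 2 * (m - 1) + 1)
        ≤ mass c G' tiny := by
      have goalR : (((3 * (m - 1) * q + (4 * (m - 1) * (Fintype.card V - 1) + 2 * (m - 1) + 1)) : ℕ) : ℝ)
          ≤ ((mass c G' tiny : ℕ) : ℝ) := by
        push_cast [Nat.cast_sub hm1, Nat.cast_sub hn1]
        rw [← hN]
        -- named real quantities
        have c1 : (mass c G' tiny : ℝ) = (G'.edgeFinset.card : ℝ)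
            - (mass c G' (richF c α) : ℝ) - (mass c G' (good \ richF c α) : ℝ) := by
          have e1 : (mass c G' tiny : ℝ) + (mass c G' good : ℝ) = (mass c G' K : ℝ) := by
            exact_mod_cast hTsum
          have e2 : (mass c G' (good \ richF c α) : ℝ) + (mass c G' (richF c α) : ℝ)
              = (mass c G' good : ℝ) := by exact_mod_cast hgoodsplit
          have e3 : (mass c G' K : ℝ) = (G'.edgeFinset.card : ℝ) := by
            exact_mod_cast hsumK
          linarith
        have e_q : (q : ℝ) + (g : ℝ) + 1 = N := by
          have h5 : q + g + 1 = Fintype.card V := by omega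
          rw [hN]
          exact_mod_cast h5
        have e_s : (s : ℝ) + (r : ℝ) = (g : ℝ) := by exact_mod_cast hsrg
        have e_qs : (q : ℝ) + (s : ℝ) = N - 1 - (r : ℝ) := by linarith
        have hq0 : (0:ℝ) ≤ (q : ℝ) := Nat.cast_nonneg _
        have hs0 : (0:ℝ) ≤ (s : ℝ) := Nat.cast_nonneg _
        have d0 : N * (N - 1) / 2 - β * N * (N - 1) - (r : ℝ) * (N / 2)
            - (s : ℝ) * (α * N) ≤ (mass c G' tiny : ℝ) := by
          linarith [hE, hrichmass, hsmass, c1]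
        have d1 : N * (N - 1) / 2 - (r : ℝ) * (N / 2) = (N / 2) * ((q : ℝ) + (s : ℝ)) := by
          rw [e_qs]; ring
        have d2 : (s : ℝ) * (α * N) ≤ (s : ℝ) * (N / 8) := by
          apply mul_le_mul_of_nonneg_left _ hs0
          nlinarith
        have d3 : (N / 2) * ((q : ℝ) + (s : ℝ)) = (N / 2) * (q : ℝ) + (N / 2) * (s : ℝ) := by
          ring
        have d4 : β * N * (N - 1) = β * N * N - β * N := by ring
        have dT : (N / 2) * (q : ℝ) + (3 * N / 8) * (s : ℝ) - β * N * N + β * N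
            ≤ (mass c G' tiny : ℝ) := by
          have e5 : (N / 2) * (s : ℝ) - (s : ℝ) * (N / 8) = (3 * N / 8) * (s : ℝ) := by ring
          linarith
        -- bound the goal LHS
        have hX1 : (m : ℝ) - 1 ≤ β * N := by linarith
        have hX0 : (0:ℝ) ≤ (m : ℝ) - 1 := by
          have : (1:ℝ) ≤ (m : ℝ) := by exact_mod_cast hm1
          linarith
        have hNm1 : (0:ℝ) ≤ N - 1 := by linarith
        have g1 : 3 * ((m : ℝ) - 1) * (q : ℝ) ≤ 3 * (β * N) * (q : ℝ) := by
          apply mul_le_mul_of_nonneg_right _ hq0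
          linarith
        have g2 : 4 * ((m : ℝ) - 1) * (N - 1) ≤ 4 * (β * N) * (N - 1) := by
          apply mul_le_mul_of_nonneg_right _ hNm1
          linarith
        have g3 : 2 * ((m : ℝ) - 1) ≤ 2 * (β * N) := by linarith
        -- key inequality
        have k1 : (3 * N / 8) ≤ N / 2 - 3 * (β * N) := by nlinarith
        have k2 : (3 * N / 8) * (q : ℝ) ≤ (N / 2 - 3 * (β * N)) * (q : ℝ) :=
          mul_le_mul_of_nonneg_right k1 hq0
        have k3 : 16 * (β * N) - 1 ≤ (q : ℝ) + (s : ℝ) := by linarith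
        have k4 : (3 * N / 8) * (16 * (β * N) - 1) ≤ (3 * N / 8) * ((q : ℝ) + (s : ℝ)) := by
          apply mul_le_mul_of_nonneg_left k3
          linarith
        have k5 : (3 * N / 8) * (16 * (β * N) - 1) = 6 * (β * N) * N - 3 * N / 8 := by ring
        have k6 : N ≤ (β * N) * N := by nlinarith
        have k7 : (3 * N / 8) * ((q : ℝ) + (s : ℝ))
            = (3 * N / 8) * (q : ℝ) + (3 * N / 8) * (s : ℝ) := by ring
        have k8 : (N / 2 - 3 * (β * N)) * (q : ℝ)
            = (N / 2) * (q : ℝ) - 3 * (β * N) * (q : ℝ) := by ring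
        linarith
      exact_mod_cast goalR
    obtain ⟨C, hCsub, hCdisj, hCwit⟩ := extract c G' hproper m q tiny htiny_lt hmassT_ge
    set fB : Fin g → {x // x ∈ good} :=
      fun i => good.equivFin.symm (finCongr hg i) with hfB
    have hfBinj : Function.Injective fB := fun i j hij => by
      have := good.equivFin.symm.injective hij
      simpa using (finCongr hg).injective this
    have hqlt : ∀ i : Fin (Fintype.card V - 1), ¬ ((i : ℕ) < g) → (i : ℕ) - g < q := by
      intro i hi
      have := i.isLt
      push_neg at hi
      omega
    apply assemble G' c β (fun i =>
      if h : (i : ℕ) < g then {(fB ⟨(i : ℕ), h⟩ : ℕ)} else C ⟨(i : ℕ) - g, hqlt i h⟩)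
    · intro i j hne
      have hijval : (i : ℕ) ≠ (j : ℕ) := fun h => hne (Fin.val_injective h)
      by_cases hi : (i : ℕ) < g <;> by_cases hj : (j : ℕ) < g
      · simp only [dif_pos hi, dif_pos hj]
        rw [Finset.disjoint_singleton]
        intro h
        have := hfBinj (Subtype.coe_injective h)
        rw [Fin.mk.injEq] at this
        exact hijval this
      · simp only [dif_pos hi, dif_neg hj]
        rw [Finset.disjoint_left]
        intro x hx hx'
        rw [Finset.mem_singleton] at hx
        have hxgood : x ∈ good := hx ▸ (fB ⟨(i : ℕ), hi⟩).2
        exact (Finset.mem_sdiff.1 (hCsub _ hx')).2 hxgood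
      · simp only [dif_neg hi, dif_pos hj]
        rw [Finset.disjoint_left]
        intro x hx hx'
        rw [Finset.mem_singleton] at hx'
        have hxgood : x ∈ good := hx' ▸ (fB ⟨(j : ℕ), hj⟩).2
        exact (Finset.mem_sdiff.1 (hCsub _ hx)).2 hxgood
      · simp only [dif_neg hi, dif_neg hj]
        apply hCdisj
        intro hpe
        rw [Fin.mk.injEq] at hpe
        omega
    · intro i
      by_cases hi : (i : ℕ) < g
      · simp only [dif_pos hi]
        have hkgood : (fB ⟨(i : ℕ), hi⟩ : ℕ) ∈ good := (fB ⟨(i : ℕ), hi⟩).2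
        have hmdeg : m ≤ deg c G' (fB ⟨(i : ℕ), hi⟩ : ℕ) := (Finset.mem_filter.1 hkgood).2
        have hrich : β * N ≤ (deg c G' (fB ⟨(i : ℕ), hi⟩ : ℕ) : ℝ) := by
          refine hmge.trans ?_
          exact_mod_cast hmdeg
        simpa using rich_single G' c hproper hrich
      · simp only [dif_neg hi]
        obtain ⟨M, hMG, hMC, hMm, hMcard⟩ := hCwit ⟨(i : ℕ) - g, hqlt i hi⟩
        refine ⟨M, ?_, ?_, hMm, ?_⟩
        · intro e he
          exact SimpleGraph.mem_edgeFinset.1 (hMG e (Finset.mem_coe.1 he))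
        · intro e he
          exact Finset.mem_coe.2 (hMC e he)
        · refine hmge.trans ?_
          exact_mod_cast hMcard

lemma main_case (c : Sym2 V → ℕ) (α β : ℝ) (hα : 0 < α) (hα' : α ≤ 1 / 8) (hβ : β ≤ α / 4)
    (hproper : ProperColoring (⊤ : SimpleGraph V) c)
    (hβn1 : 1 ≤ β * (Fintype.card V : ℝ))
    (hS : ((richF c α).card : ℝ) <
      (Fintype.card V : ℝ) - 16 * β * (Fintype.card V : ℝ)) :
    RobustlyColoured (⊤ : SimpleGraph V) c β ⌊β * (Fintype.card V : ℝ)⌋₊ := by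
  intro F hF
  obtain ⟨G0, hG0⟩ : ∃ G0 : SimpleGraph V, G0 = (⊤ : SimpleGraph V) := ⟨_, rfl⟩
  rw [show ((⊤ : SimpleGraph V).deleteEdges (⋃ i, (F i).edgeSet))
      = G0.deleteEdges (⋃ i, (F i).edgeSet) by rw [hG0]]
  set D : Set (Sym2 V) := ⋃ i, (F i).edgeSet with hD
  set G' : SimpleGraph V := G0.deleteEdges D with hG'
  have hES : G'.edgeSet = G0.edgeSet \ D := SimpleGraph.edgeSet_deleteEdges D
  have hsub : G'.edgeSet ⊆ G0.edgeSet := by rw [hES]; exact Set.diff_subset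
  set Dfin : Finset (Sym2 V) := Finset.univ.biUnion (fun i => (F i).edgeFinset) with hDfin
  have hDeq : D = ↑Dfin := by
    ext e
    constructor
    · intro he
      obtain ⟨i, hi⟩ := Set.mem_iUnion.1 he
      exact Finset.mem_coe.2 (Finset.mem_biUnion.2
        ⟨i, Finset.mem_univ _, SimpleGraph.mem_edgeFinset.2 hi⟩)
    · intro he
      obtain ⟨i, _, hi⟩ := Finset.mem_biUnion.1 (Finset.mem_coe.1 he)
      exact Set.mem_iUnion.2 ⟨i, SimpleGraph.mem_edgeFinset.1 hi⟩
  have hDcard : Dfin.card ≤ ⌊β * (Fintype.card V : ℝ)⌋₊ * (Fintype.card V - 1) := by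
    calc Dfin.card ≤ ∑ i : Fin ⌊β * (Fintype.card V : ℝ)⌋₊, (F i).edgeFinset.card := Finset.card_biUnion_le
      _ ≤ ∑ _i : Fin ⌊β * (Fintype.card V : ℝ)⌋₊, (Fintype.card V - 1) :=
          Finset.sum_le_sum (fun i _ => acyclic_card_le _ (hF i).2.1)
      _ = ⌊β * (Fintype.card V : ℝ)⌋₊ * (Fintype.card V - 1) := by
          rw [Finset.sum_const, Finset.card_univ, Fintype.card_fin, smul_eq_mul]
  refine deleted_well c α β hα hα' hβ hproper hβn1 hS G0 G' hG0 hsub ?_ ?_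
  · have h1 : G0.edgeSet ⊆ G'.edgeSet ∪ D := by
      intro e he
      by_cases h : e ∈ D
      · exact Or.inr h
      · exact Or.inl (by rw [hES]; exact ⟨he, h⟩)
    calc G0.edgeSet.ncard ≤ (G'.edgeSet ∪ D).ncard :=
          Set.ncard_le_ncard h1 (Set.toFinite _)
      _ ≤ G'.edgeSet.ncard + D.ncard := Set.ncard_union_le _ _
      _ ≤ G'.edgeSet.ncard + ⌊β * (Fintype.card V : ℝ)⌋₊ * (Fintype.card V - 1) := by
          rw [hDeq, Set.ncard_coe_finset]
          omega
  · intro k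
    rw [deg_def, deg_def]
    have hsub2 : (G0.edgeFinset.filter (fun e => c e = k)) ⊆
        (G'.edgeFinset.filter (fun e => c e = k)) ∪ (Dfin.filter (fun e => c e = k)) := by
      intro e he
      obtain ⟨he1, he2⟩ := Finset.mem_filter.1 he
      by_cases hmem : e ∈ D
      · refine Finset.mem_union_right _ (Finset.mem_filter.2 ⟨?_, he2⟩)
        rw [hDeq] at hmem
        exact Finset.mem_coe.1 hmem
      · refine Finset.mem_union_left _ (Finset.mem_filter.2 ⟨?_, he2⟩)
        refine SimpleGraph.mem_edgeFinset.2 ?_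
        rw [hES]
        exact ⟨SimpleGraph.mem_edgeFinset.1 he1, hmem⟩
    have hDk : (Dfin.filter (fun e => c e = k)).card ≤ ⌊β * (Fintype.card V : ℝ)⌋₊ := by
      have hsub3 : Dfin.filter (fun e => c e = k) ⊆
          Finset.univ.biUnion (fun i => (F i).edgeFinset.filter (fun e => c e = k)) := by
        intro e he
        obtain ⟨hDm, hck⟩ := Finset.mem_filter.1 he
        obtain ⟨i, _, hi⟩ := Finset.mem_biUnion.1 hDm
        exact Finset.mem_biUnion.2 ⟨i, Finset.mem_univ _, Finset.mem_filter.2 ⟨hi, hck⟩⟩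
      calc (Dfin.filter (fun e => c e = k)).card
          ≤ ∑ i : Fin ⌊β * (Fintype.card V : ℝ)⌋₊, ((F i).edgeFinset.filter (fun e => c e = k)).card :=
            (Finset.card_le_card hsub3).trans Finset.card_biUnion_le
        _ ≤ ∑ _i : Fin ⌊β * (Fintype.card V : ℝ)⌋₊, 1 := Finset.sum_le_sum (fun i _ => by
            apply Finset.card_le_one.2
            intro a ha b hb
            have ha' := Finset.mem_filter.1 ha
            have hb' := Finset.mem_filter.1 hb
            exact (hF i).2.2 (SimpleGraph.mem_edgeFinset.1 ha'.1)
              (SimpleGraph.mem_edgeFinset.1 hb'.1) (ha'.2.trans hb'.2.symm))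
        _ = ⌊β * (Fintype.card V : ℝ)⌋₊ := by
            rw [Finset.sum_const, Finset.card_univ, Fintype.card_fin, smul_eq_mul, mul_one]
    calc (G0.edgeFinset.filter (fun e => c e = k)).card
        ≤ ((G'.edgeFinset.filter (fun e => c e = k))
            ∪ (Dfin.filter (fun e => c e = k))).card := Finset.card_le_card hsub2
      _ ≤ (G'.edgeFinset.filter (fun e => c e = k)).card
            + (Dfin.filter (fun e => c e = k)).card := Finset.card_union_le _ _
      _ ≤ (G'.edgeFinset.filter (fun e => c e = k)).card + ⌊β * (Fintype.card V : ℝ)⌋₊ := by omega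
    exact Nat.add_le_add_right (Finset.card_le_card (fun e he => by simpa using he)) _

end Stmt3Aux

theorem stmt3 {V : Type*} [Fintype V] [DecidableEq V] (c : Sym2 V → ℕ)
    (α β : ℝ) (hα : 0 < α) (hα' : α ≤ 1 / 8) (hβ : β ≤ α / 4)
    (hproper : ProperColoring (⊤ : SimpleGraph V) c) :
    (∃ S : Finset ℕ, (∀ k ∈ S, RichClass (⊤ : SimpleGraph V) c α {k}) ∧
        (Fintype.card V : ℝ) - 16 * β * (Fintype.card V : ℝ) ≤ (S.card : ℝ)) ∨
    RobustlyColoured (⊤ : SimpleGraph V) c β ⌊β * (Fintype.card V : ℝ)⌋₊ := by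
  classical
  by_cases hβ0 : β * (Fintype.card V : ℝ) ≤ 0
  · right
    intro F hF
    exact Stmt3Aux.wellColoured_of_nonpos _ c β hβ0
  push_neg at hβ0
  by_cases hβsmall : β * (Fintype.card V : ℝ) < 1
  · right
    intro F hF
    haveI hIE : IsEmpty (Fin ⌊β * (Fintype.card V : ℝ)⌋₊) := by
      rw [Nat.floor_eq_zero.2 hβsmall]
      infer_instance
    have hU : (⋃ i, (F i).edgeSet) = ∅ := Set.iUnion_of_empty _
    rw [hU, SimpleGraph.deleteEdges_empty]
    exact Stmt3Aux.wellColoured_top_small c hproper β hβsmall.le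
  push_neg at hβsmall
  by_cases hScard : (Fintype.card V : ℝ) - 16 * β * (Fintype.card V : ℝ)
      ≤ ((Stmt3Aux.richF c α).card : ℝ)
  · left
    exact ⟨Stmt3Aux.richF c α, fun k hk => (Finset.mem_filter.1 hk).2, hScard⟩
  · right
    push_neg at hScard
    exact Stmt3Aux.main_case c α β hα hα' hβ hproper hβsmall hScard
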